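/- Let g_x, g_v be real numbers and ρ_{x,j}, ρ_{v,j} (j = −2,…,2) real coefficients with ρ_{x,0} = ρ_{v,0} = 1 and Σ_{j=-2}^{2} ρ_{x,j} = Σ_{j=-2}^{2} ρ_{v,j} = 0. Define λ_x(φ) = g_x·Σ_{j=-2}^{2} ρ_{x,j} e^{iφj}, λ_v(φ) = g_v·Σ_{j=-2}^{2} ρ_{v,j} e^{iφj}, α_{x,1} = ρ_{x,1} + ρ_{x,−1}, β_{x,1} = ρ_{x,1} − ρ_{x,−1}, β_{x,2} = ρ_{x,2} − ρ_{x,−2}, β_{v,1} = ρ_{v,1} − ρ_{v,−1}, β_{v,2} = ρ_{v,2} − ρ_{v,−2}, s = β_{v,1} + 2β_{v,2}, and D = g_v²·s² − 2g_x·(4 + 3α_{x,1}). Assume β_{x,1} + 2β_{x,2} = 0 and D < 0. Then there exists ε > 0 such that for every φ with 0 < φ < ε there is a complex number ν with ν² − λ_v(φ)·ν − λ_x(φ) = 0 and Re ν > 0. -/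

import Mathlib

set_option maxHeartbeats 1000000

/-- The eigenvalue curve `λ(φ) = g·Σ_{j=-2}^{2} ρ_j e^{iφj}` of a circulant
next-nearest-neighbor Laplacian. -/
noncomputable def lam (g : ℝ) (ρ : ℤ → ℝ) (φ : ℝ) : ℂ :=
  (g : ℂ) * ∑ j ∈ Finset.Icc (-2 : ℤ) 2,
    (ρ j : ℂ) * Complex.exp (Complex.I * (φ : ℂ) * (j : ℂ))

lemma lam_expand (g : ℝ) (ρ : ℤ → ℝ) (φ : ℝ) :
    lam g ρ φ = (g : ℂ) * ((ρ (-2) : ℂ) * Complex.exp (Complex.I * (φ : ℂ) * (-2 : ℂ))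
      + (ρ (-1) : ℂ) * Complex.exp (Complex.I * (φ : ℂ) * (-1 : ℂ))
      + (ρ 0 : ℂ) * Complex.exp (Complex.I * (φ : ℂ) * (0 : ℂ))
      + (ρ 1 : ℂ) * Complex.exp (Complex.I * (φ : ℂ) * (1 : ℂ))
      + (ρ 2 : ℂ) * Complex.exp (Complex.I * (φ : ℂ) * (2 : ℂ))) := by
  rw [lam, show (Finset.Icc (-2 : ℤ) 2) = ({-2,-1,0,1,2} : Finset ℤ) from by decide]
  rw [Finset.sum_insert (by decide), Finset.sum_insert (by decide),
    Finset.sum_insert (by decide), Finset.sum_insert (by decide), Finset.sum_singleton]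
  push_cast
  ring

lemma expE (t : ℝ) : Complex.exp (((t : ℝ) : ℂ) * Complex.I)
    = ((Real.cos t : ℝ) : ℂ) + ((Real.sin t : ℝ) : ℂ) * Complex.I := by
  rw [Complex.exp_mul_I, Complex.ofReal_cos, Complex.ofReal_sin]

lemma lam_eq (g : ℝ) (ρ : ℤ → ℝ) (φ : ℝ) :
    lam g ρ φ = ((g * (ρ 0 + (ρ 1 + ρ (-1)) * Real.cos φ + (ρ 2 + ρ (-2)) * Real.cos (2*φ)) : ℝ) : ℂ)
      + ((g * ((ρ 1 - ρ (-1)) * Real.sin φ + (ρ 2 - ρ (-2)) * Real.sin (2*φ)) : ℝ) : ℂ) * Complex.I := by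
  rw [lam_expand]
  rw [show Complex.I * (φ:ℂ) * (-2 : ℂ) = ((-(2*φ) : ℝ) : ℂ) * Complex.I by push_cast; ring,
    show Complex.I * (φ:ℂ) * (-1 : ℂ) = ((-φ : ℝ) : ℂ) * Complex.I by push_cast; ring,
    show Complex.I * (φ:ℂ) * (0 : ℂ) = ((0 : ℝ) : ℂ) * Complex.I by push_cast; ring,
    show Complex.I * (φ:ℂ) * (1 : ℂ) = ((φ : ℝ) : ℂ) * Complex.I by push_cast; ring,
    show Complex.I * (φ:ℂ) * (2 : ℂ) = ((2*φ : ℝ) : ℂ) * Complex.I by push_cast; ring,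
    expE, expE, expE, expE, expE]
  rw [Real.cos_neg, Real.sin_neg, Real.cos_neg, Real.sin_neg, Real.cos_zero, Real.sin_zero]
  push_cast
  ring

lemma lam_re (g : ℝ) (ρ : ℤ → ℝ) (φ : ℝ) :
    (lam g ρ φ).re = g * (ρ 0 + (ρ 1 + ρ (-1)) * Real.cos φ + (ρ 2 + ρ (-2)) * Real.cos (2*φ)) := by
  rw [lam_eq]
  simp only [Complex.add_re, Complex.mul_re, Complex.ofReal_re, Complex.ofReal_im,
    Complex.I_re, Complex.I_im]
  ring

lemma lam_im (g : ℝ) (ρ : ℤ → ℝ) (φ : ℝ) :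
    (lam g ρ φ).im = g * ((ρ 1 - ρ (-1)) * Real.sin φ + (ρ 2 - ρ (-2)) * Real.sin (2*φ)) := by
  rw [lam_eq]
  simp only [Complex.add_im, Complex.mul_im, Complex.ofReal_re, Complex.ofReal_im,
    Complex.I_re, Complex.I_im]
  ring

lemma exists_sqrt (z : ℂ) (hz : 0 < z.re) :
    ∃ w : ℂ, w ^ 2 = z ∧ 0 ≤ w.re ∧ z.re ≤ w.re ^ 2 := by
  set A := ‖z‖ with hA
  have habs : z.re ≤ A := Complex.re_le_norm z
  have hpos : 0 < (A + z.re) / 2 := by linarith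
  set r := Real.sqrt ((A + z.re) / 2) with hrdef
  have hr : 0 < r := Real.sqrt_pos.mpr hpos
  have hr2 : r ^ 2 = (A + z.re) / 2 := Real.sq_sqrt hpos.le
  have him2 : z.im ^ 2 = A ^ 2 - z.re ^ 2 := by
    have h1 : A ^ 2 = z.re * z.re + z.im * z.im := by
      rw [hA, Complex.sq_norm, Complex.normSq_apply]
    nlinarith [h1]
  refine ⟨(r : ℂ) + ((z.im / (2 * r) : ℝ) : ℂ) * Complex.I, ?_, ?_, ?_⟩
  · apply Complex.ext
    · simp only [pow_two, Complex.add_re, Complex.add_im, Complex.mul_re, Complex.mul_im,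
        Complex.ofReal_re, Complex.ofReal_im, Complex.I_re, Complex.I_im]
      field_simp
      nlinarith [hr2, him2, hr]
    · simp only [pow_two, Complex.add_re, Complex.add_im, Complex.mul_re, Complex.mul_im,
        Complex.ofReal_re, Complex.ofReal_im, Complex.I_re, Complex.I_im]
      field_simp
      ring
  · simp only [Complex.add_re, Complex.mul_re, Complex.ofReal_re, Complex.ofReal_im,
      Complex.I_re, Complex.I_im]
    nlinarith [hr]
  · simp only [Complex.add_re, Complex.mul_re, Complex.ofReal_re, Complex.ofReal_im,
      Complex.I_re, Complex.I_im]
    nlinarith [hr2, habs]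

lemma pos_add_of_sq_lt_sq (a b : ℝ) (hb : 0 ≤ b) (h : a^2 < b^2) : 0 < a + b := by
  nlinarith [h, hb, sq_nonneg (a + b)]

/-- Corollary 1(i) of the paper: if `β_{x,1} + 2β_{x,2} = 0` and
`D = g_v²(β_{v,1}+2β_{v,2})² − 2g_x(4+3α_{x,1}) < 0`, then for all
sufficiently small `φ > 0` the characteristic equation has a root with
positive real part. -/
theorem unstable_of_D_neg (gx gv : ℝ) (ρx ρv : ℤ → ℝ)
    (hx0 : ρx 0 = 1) (hv0 : ρv 0 = 1)
    (hxsum : ∑ j ∈ Finset.Icc (-2 : ℤ) 2, ρx j = 0)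
    (hvsum : ∑ j ∈ Finset.Icc (-2 : ℤ) 2, ρv j = 0)
    (hbx : (ρx 1 - ρx (-1)) + 2 * (ρx 2 - ρx (-2)) = 0)
    (hD : gv ^ 2 * ((ρv 1 - ρv (-1)) + 2 * (ρv 2 - ρv (-2))) ^ 2
        - 2 * gx * (4 + 3 * (ρx 1 + ρx (-1))) < 0) :
    ∃ ε > 0, ∀ φ : ℝ, 0 < φ → φ < ε →
      ∃ ν : ℂ, ν ^ 2 - lam gv ρv φ * ν - lam gx ρx φ = 0 ∧ 0 < ν.re := by
  set α1 : ℝ := ρx 1 + ρx (-1) with hα1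
  set α2 : ℝ := ρx 2 + ρx (-2) with hα2
  set β1 : ℝ := ρv 1 - ρv (-1) with hβ1
  set β2 : ℝ := ρv 2 - ρv (-2) with hβ2
  set s : ℝ := β1 + 2 * β2 with hs
  set D : ℝ := gv ^ 2 * s ^ 2 - 2 * gx * (4 + 3 * α1) with hDdef
  have hxs : 1 + α1 + α2 = 0 := by
    have h := hxsum
    rw [show (Finset.Icc (-2 : ℤ) 2) = ({-2,-1,0,1,2} : Finset ℤ) from by decide,
      Finset.sum_insert (by decide), Finset.sum_insert (by decide),
      Finset.sum_insert (by decide), Finset.sum_insert (by decide),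
      Finset.sum_singleton, hx0] at h
    rw [hα1, hα2]; linarith only [h]
  set B : ℝ := |β1| + 2 * |β2| with hB
  have hB0 : 0 ≤ B := by positivity
  set C : ℝ := 4 * |gx| * (|α1| + |α2|) + gv ^ 2 * (2 * |s| * B + B ^ 2) with hC
  have hC0 : 0 ≤ C := by positivity
  clear_value α1 α2 β1 β2 s D B C
  refine ⟨min (1/2) ((-D) / (C + 1)), ?_, ?_⟩
  · exact lt_min (by norm_num) (div_pos (by linarith) (by linarith))
  intro φ hφ hφε
  have hφ2 : φ < 1/2 := lt_of_lt_of_le hφε (min_le_left _ _)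
  have hφD : φ < (-D) / (C + 1) := lt_of_lt_of_le hφε (min_le_right _ _)
  have hφ1 : φ ≤ 1 := by linarith
  have habsφ : |φ| = φ := abs_of_pos hφ
  have habs2φ : |2*φ| = 2*φ := abs_of_pos (by linarith)
  have hφ4pos : (0:ℝ) < φ^4 := pow_pos hφ 4
  have hφ3pos : (0:ℝ) < φ^3 := pow_pos hφ 3
  have hφ43 : φ^4 ≤ φ^3 := by
    have := mul_le_mul_of_nonneg_left hφ1 hφ3pos.le
    calc φ^4 = φ^3 * φ := by ring
      _ ≤ φ^3 * 1 := this
      _ = φ^3 := by ring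
  set c1 : ℝ := Real.cos φ - (1 - φ^2/2) with hc1def
  set c2 : ℝ := Real.cos (2*φ) - (1 - (2*φ)^2/2) with hc2def
  set t1 : ℝ := Real.sin φ - (φ - φ^3/6) with ht1def
  set t2 : ℝ := Real.sin (2*φ) - (2*φ - (2*φ)^3/6) with ht2def
  clear_value c1 c2 t1 t2
  have hc1 : |c1| ≤ φ^4 := by
    have h := Real.cos_bound (x := φ) (by rw [habsφ]; linarith)
    rw [habsφ] at h
    rw [hc1def]
    linarith only [h, hφ4pos]
  have hc2 : |c2| ≤ φ^4 := by
    have h := Real.cos_bound (x := 2*φ) (by rw [habs2φ]; linarith)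
    rw [habs2φ] at h
    rw [hc2def]
    linarith only [hφ4pos, h]
  have hst1 : |Real.sin φ - φ| ≤ φ^3 := by
    have h := Real.sin_bound (x := φ) (by rw [habsφ]; linarith)
    rw [habsφ] at h
    rw [← ht1def] at h
    have h2 : |Real.sin φ - φ| ≤ |t1| + φ^3/6 := by
      have : Real.sin φ - φ = t1 + (-(φ^3/6)) := by rw [ht1def]; ring
      rw [this]
      calc |t1 + (-(φ^3/6))| ≤ |t1| + |(-(φ^3/6))| := abs_add_le _ _
        _ = |t1| + φ^3/6 := by
            rw [abs_neg, abs_of_pos (show (0:ℝ) < φ^3/6 by linarith)]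
    have h5 : φ^4 * φ ≤ φ^4 * 1 := mul_le_mul_of_nonneg_left hφ1 hφ4pos.le
    linarith only [h, h2, hφ43, hφ3pos, hφ4pos, h5]
  have hst2 : |Real.sin (2*φ) - 2*φ| ≤ 2*φ^3 := by
    have h := Real.sin_bound (x := 2*φ) (by rw [habs2φ]; linarith)
    rw [habs2φ] at h
    rw [← ht2def] at h
    have h2 : |Real.sin (2*φ) - 2*φ| ≤ |t2| + (2*φ)^3/6 := by
      have : Real.sin (2*φ) - 2*φ = t2 + (-((2*φ)^3/6)) := by rw [ht2def]; ring
      rw [this]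
      calc |t2 + (-((2*φ)^3/6))| ≤ |t2| + |(-((2*φ)^3/6))| := abs_add_le _ _
        _ = |t2| + (2*φ)^3/6 := by
            rw [abs_neg, abs_of_pos (show (0:ℝ) < (2*φ)^3/6 by linarith [hφ3pos])]
    have hφ432 : φ^4 ≤ φ^3/2 := by
      have := mul_le_mul_of_nonneg_left hφ2.le hφ3pos.le
      calc φ^4 = φ^3 * φ := by ring
        _ ≤ φ^3 * (1/2) := this
        _ = φ^3/2 := by ring
    have h5 : φ^4 * φ ≤ φ^4 * 1 := mul_le_mul_of_nonneg_left hφ1 hφ4pos.le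
    linarith only [h, h2, hφ432, hφ3pos, hφ4pos, h5]
  set T1 : ℝ := Real.sin φ - φ with hT1
  set T2 : ℝ := Real.sin (2*φ) - 2*φ with hT2
  clear_value T1 T2
  set Rx : ℝ := (lam gx ρx φ).re with hRxdef
  set Rv : ℝ := (lam gv ρv φ).re with hRvdef
  set Iv : ℝ := (lam gv ρv φ).im with hIvdef
  have hRx : Rx = gx * (4 + 3*α1) * φ^2 / 2 + gx * (α1 * c1 + α2 * c2) := by
    rw [hRxdef, lam_re, hx0]
    have e1 : Real.cos φ = 1 - φ^2/2 + c1 := by rw [hc1def]; ring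
    have e2 : Real.cos (2*φ) = 1 - (2*φ)^2/2 + c2 := by rw [hc2def]; ring
    rw [e1, e2, ← hα1, ← hα2]
    have hα2' : α2 = -1 - α1 := by linarith
    rw [hα2']; ring
  have hIv : Iv = gv * s * φ + gv * (β1 * T1 + β2 * T2) := by
    rw [hIvdef, lam_im]
    have e1 : Real.sin φ = φ + T1 := by rw [hT1]; ring
    have e2 : Real.sin (2*φ) = 2*φ + T2 := by rw [hT2]; ring
    rw [e1, e2, ← hβ1, ← hβ2, hs]; ring
  set u : ℝ := β1 * T1 + β2 * T2 with hu
  clear_value u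
  have huB : |u| ≤ B * φ^3 := by
    rw [hu]
    calc |β1 * T1 + β2 * T2| ≤ |β1 * T1| + |β2 * T2| := abs_add_le _ _
      _ = |β1| * |T1| + |β2| * |T2| := by rw [abs_mul, abs_mul]
      _ ≤ |β1| * φ^3 + |β2| * (2*φ^3) :=
          add_le_add (mul_le_mul_of_nonneg_left hst1 (abs_nonneg _))
            (mul_le_mul_of_nonneg_left hst2 (abs_nonneg _))
      _ = B * φ^3 := by rw [hB]; ring
  have hec : |α1 * c1 + α2 * c2| ≤ (|α1| + |α2|) * φ^4 := by
    calc |α1 * c1 + α2 * c2| ≤ |α1 * c1| + |α2 * c2| := abs_add_le _ _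
      _ = |α1| * |c1| + |α2| * |c2| := by rw [abs_mul, abs_mul]
      _ ≤ |α1| * φ^4 + |α2| * φ^4 :=
          add_le_add (mul_le_mul_of_nonneg_left hc1 (abs_nonneg _))
            (mul_le_mul_of_nonneg_left hc2 (abs_nonneg _))
      _ = (|α1| + |α2|) * φ^4 := by ring
  have hF : 0 < 4 * Rx - Iv^2 := by
    have key : 4 * Rx - Iv^2
        = -D * φ^2 + (4 * gx * (α1 * c1 + α2 * c2) - gv^2 * (2 * s * φ * u + u^2)) := by
      rw [hRx, hIv, hDdef, hu]; ring
    have b1 : -(4 * |gx| * ((|α1| + |α2|) * φ^4)) ≤ 4 * gx * (α1 * c1 + α2 * c2) := by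
      have habs : |4 * gx * (α1 * c1 + α2 * c2)| ≤ 4 * |gx| * ((|α1| + |α2|) * φ^4) := by
        rw [abs_mul, abs_mul, abs_of_nonneg (by norm_num : (0:ℝ) ≤ 4)]
        gcongr
      linarith [(abs_le.mp habs).1]
    have h2su : 2 * s * φ * u ≤ 2 * |s| * B * φ^4 := by
      have habs : |2 * s * φ * u| ≤ 2 * |s| * φ * (B * φ^3) := by
        rw [abs_mul, abs_mul, abs_mul, habsφ, abs_of_nonneg (by norm_num : (0:ℝ) ≤ 2)]
        gcongr
      calc 2 * s * φ * u ≤ |2 * s * φ * u| := le_abs_self _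
        _ ≤ 2 * |s| * φ * (B * φ^3) := habs
        _ = 2 * |s| * B * φ^4 := by ring
    have hu2 : u^2 ≤ B^2 * φ^4 := by
      have h1 : u^2 ≤ (B*φ^3)^2 := by
        calc u^2 = |u|^2 := (sq_abs u).symm
          _ ≤ (B*φ^3)^2 := pow_le_pow_left₀ (abs_nonneg u) huB 2
      have hφsq1 : φ^2 ≤ 1 := by
        calc φ^2 = φ * φ := by ring
          _ ≤ 1 * 1 := mul_le_mul hφ1 hφ1 hφ.le zero_le_one
          _ = 1 := by ring
      have hφ64 : φ^6 ≤ φ^4 := by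
        have h3 := mul_le_mul_of_nonneg_left hφsq1 hφ4pos.le
        calc φ^6 = φ^4 * φ^2 := by ring
          _ ≤ φ^4 * 1 := h3
          _ = φ^4 := by ring
      have h2' := mul_le_mul_of_nonneg_left hφ64 (sq_nonneg B)
      calc u^2 ≤ (B*φ^3)^2 := h1
        _ = B^2 * φ^6 := by ring
        _ ≤ B^2 * φ^4 := h2'
    have b2 : gv^2 * (2 * s * φ * u + u^2) ≤ gv^2 * (2 * |s| * B * φ^4 + B^2 * φ^4) :=
      mul_le_mul_of_nonneg_left (by linarith only [h2su, hu2]) (sq_nonneg gv)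
    have hCφ : C * φ^4 < (-D) * φ^2 := by
      have hφsq : φ^2 ≤ φ := by
        have := mul_le_mul_of_nonneg_right hφ1 hφ.le
        calc φ^2 = φ * φ := by ring
          _ ≤ 1 * φ := this
          _ = φ := by ring
      have hmul : φ * (C + 1) < -D := (lt_div_iff₀ (by linarith : (0:ℝ) < C + 1)).mp hφD
      have h1 : (C + 1) * φ^2 < -D := by
        have h4 := mul_le_mul_of_nonneg_left hφsq (by linarith : (0:ℝ) ≤ C + 1)
        linarith only [hmul, h4]
      have h2 : (C + 1) * φ^2 * φ^2 < (-D) * φ^2 :=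
        mul_lt_mul_of_pos_right h1 (pow_pos hφ 2)
      have h3 := mul_le_mul_of_nonneg_right (show C ≤ C + 1 by linarith)
        (mul_nonneg (sq_nonneg φ) (sq_nonneg φ))
      linarith only [h2, h3]
    have hCexp : 4 * |gx| * ((|α1| + |α2|) * φ^4) + gv^2 * (2 * |s| * B * φ^4 + B^2 * φ^4)
        = C * φ^4 := by rw [hC]; ring
    linarith only [key, b1, b2, hCφ, hCexp]
  set z : ℂ := (lam gv ρv φ)^2 + 4 * lam gx ρx φ with hz
  have hzre : z.re = Rv^2 - Iv^2 + 4 * Rx := by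
    rw [hz]
    simp only [pow_two, Complex.add_re, Complex.mul_re, Complex.re_ofNat, Complex.im_ofNat]
    rw [← hRvdef, ← hIvdef, ← hRxdef]; ring
  have hzpos : 0 < z.re := by rw [hzre]; linarith only [sq_nonneg Rv, hF]
  obtain ⟨w, hw2, hw0, hwre⟩ := exists_sqrt z hzpos
  refine ⟨((1/2 : ℝ) : ℂ) * (lam gv ρv φ + w), ?_, ?_⟩
  · have hw2' : w^2 = (lam gv ρv φ)^2 + 4 * lam gx ρx φ := by rw [hw2, hz]
    push_cast
    linear_combination hw2' / 4
  · have hre : (((1/2 : ℝ) : ℂ) * (lam gv ρv φ + w)).re = (1/2) * (Rv + w.re) := by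
      simp only [Complex.mul_re, Complex.ofReal_re, Complex.ofReal_im, Complex.add_re,
        Complex.add_im]
      rw [← hRvdef]; ring
    rw [hre]
    have hw2re : Rv^2 < w.re^2 := by
      rw [hzre] at hwre
      linarith only [hwre, hF]
    have := pos_add_of_sq_lt_sq Rv w.re hw0 hw2re
    linarith only [this]
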